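/- Let f be a Boolean function in k variables whose ANF has r ≤ 2^k nonzero coefficients (i.e., r monomials). Then the NNF of f has at most min(2^k, 2^r − 1) nonzero coefficients. -/

import Mathlib

open Finset

private lemma zmod2_val_add (x y : ZMod 2) :
    (((x + y).val : ℤ)) = (x.val : ℤ) + y.val - 2 * (x.val * y.val) := by revert x y; decide

private lemma zmod2_val_mul (x y : ZMod 2) :
    (((x * y).val : ℤ)) = (x.val : ℤ) * y.val := by revert x y; decide

private lemma zmod2_val_one : ((1 : ZMod 2).val : ℤ) = 1 := by decide

private lemma zmod2_ne_zero (x : ZMod 2) (h : x ≠ 0) : x.val = 1 := by revert x; decide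

private lemma val01 (x : ZMod 2) : x.val = 0 ∨ x.val = 1 := by revert x; decide

private lemma zmod2_val_injective : Function.Injective (ZMod.val : ZMod 2 → ℕ) := by
  intro x y
  revert x y; decide

private lemma zmod2_val_pow (x : ZMod 2) (n : ℕ) :
    (((x ^ n).val : ℤ)) = (x.val : ℤ) ^ n := by
  induction n with
  | zero => simpa using zmod2_val_one
  | succ n ih => rw [pow_succ, zmod2_val_mul, ih, pow_succ]

private lemma zmod2_val_parity {α : Type*} [DecidableEq α] (s : Finset α) (g : α → ZMod 2) :
    (1 : ℤ) - 2 * ((∑ u ∈ s, g u).val : ℤ) =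
      ∏ u ∈ s, (1 - 2 * ((g u).val : ℤ)) := by
  induction s using Finset.induction with
  | empty => simp
  | insert _ _ h ih =>
    rw [Finset.sum_insert h, Finset.prod_insert h, ← ih, zmod2_val_add]; ring

/-- inclusion–exclusion formula for the value of a sum mod 2 -/
private lemma parity_sum {α : Type*} [DecidableEq α] (s : Finset α) (g : α → ZMod 2) :
    ((∑ u ∈ s, g u).val : ℤ) =
      ∑ S ∈ s.powerset.filter (·.Nonempty),
        (-2 : ℤ) ^ (S.card - 1) * ∏ u ∈ S, ((g u).val : ℤ) := by
  have h2 : (-2 : ℤ) ≠ 0 := by norm_num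
  apply mul_left_cancel₀ h2
  have hp := Finset.prod_add (fun u => -2 * ((g u).val : ℤ)) (fun _ => (1 : ℤ)) s
  simp only [Finset.prod_const_one, mul_one] at hp
  have key : (1:ℤ) - 2 * ((∑ u ∈ s, g u).val : ℤ)
      = ∑ t ∈ s.powerset, (-2 : ℤ) ^ t.card * ∏ u ∈ t, ((g u).val : ℤ) := by
    rw [zmod2_val_parity]
    calc ∏ u ∈ s, (1 - 2 * ((g u).val : ℤ))
        = ∏ u ∈ s, (-2 * ((g u).val : ℤ) + 1) := by
          apply Finset.prod_congr rfl; intro x _; ring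
      _ = ∑ t ∈ s.powerset, ∏ u ∈ t, (-2 * ((g u).val : ℤ)) := hp
      _ = ∑ t ∈ s.powerset, (-2 : ℤ) ^ t.card * ∏ u ∈ t, ((g u).val : ℤ) := by
          apply Finset.sum_congr rfl; intro t _
          rw [Finset.prod_mul_distrib, Finset.prod_const]
  rw [← Finset.sum_filter_add_sum_filter_not s.powerset (·.Nonempty)] at key
  have hne : s.powerset.filter (fun S => ¬ S.Nonempty) = {∅} := by
    ext S
    simp [Finset.nonempty_iff_ne_empty]
    intro h; subst h; exact Finset.empty_subset s
  rw [hne] at key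
  simp only [Finset.sum_singleton, Finset.card_empty, pow_zero, Finset.prod_empty, mul_one] at key
  have key2 : -2 * ((∑ u ∈ s, g u).val : ℤ)
      = ∑ S ∈ s.powerset.filter (·.Nonempty), (-2 : ℤ) ^ S.card * ∏ u ∈ S, ((g u).val : ℤ) := by
    linarith
  rw [key2, Finset.mul_sum]
  apply Finset.sum_congr rfl
  intro S hS
  simp only [Finset.mem_filter] at hS
  obtain ⟨m, hm⟩ : ∃ m, S.card = m + 1 :=
    ⟨S.card - 1, (Nat.succ_pred_eq_of_pos (Finset.card_pos.mpr hS.2)).symm⟩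
  rw [hm]
  simp only [Nat.add_sub_cancel, pow_succ]
  ring

/-- the integer monomial -/
private def mono (k : ℕ) (w v : Fin k → ZMod 2) : ℤ := ∏ i, ((v i).val : ℤ) ^ (w i).val

/-- join (pointwise or) of a finite set of 0-1 vectors -/
private def jn (k : ℕ) (S : Finset (Fin k → ZMod 2)) : Fin k → ZMod 2 :=
  fun i => if ∀ u ∈ S, u i = 0 then 0 else 1

private lemma prod_mono (k : ℕ) (v : Fin k → ZMod 2) (S : Finset (Fin k → ZMod 2)) :
    ∏ u ∈ S, mono k u v = mono k (jn k S) v := by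
  unfold mono
  rw [Finset.prod_comm]
  apply Finset.prod_congr rfl
  intro i _
  rw [Finset.prod_pow_eq_pow_sum]
  by_cases h : ∀ u ∈ S, u i = 0
  · have h1 : ∑ u ∈ S, (u i).val = 0 := by
      apply Finset.sum_eq_zero
      intro u hu
      rw [h u hu]
      decide
    have h2 : jn k S i = 0 := by simp only [jn]; rw [if_pos h]
    rw [h1, h2]
    norm_num
  · have h2 : jn k S i = 1 := by simp only [jn]; rw [if_neg h]
    rw [h2]
    have h1 : 1 ≤ ∑ u ∈ S, (u i).val := by
      push_neg at h
      obtain ⟨u, hu, hne⟩ := h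
      have h3 : (u i).val = 1 := zmod2_ne_zero _ hne
      calc 1 = (u i).val := h3.symm
        _ ≤ ∑ u ∈ S, (u i).val :=
            Finset.single_le_sum (f := fun u => (u i).val) (fun _ _ => Nat.zero_le _) hu
    have hv1 : (1 : ZMod 2).val = 1 := by decide
    simp only [hv1]
    rcases val01 (v i) with h' | h'
    · simp only [h', Nat.cast_zero, pow_one]
      exact zero_pow (Nat.one_le_iff_ne_zero.mp h1)
    · rw [h']
      simp only [Nat.cast_one, one_pow]

private lemma mono_eval (k : ℕ) (u w : Fin k → ZMod 2) :
    mono k w u = if ∀ i, (w i).val ≤ (u i).val then 1 else 0 := by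
  unfold mono
  split_ifs with h
  · apply Finset.prod_eq_one
    intro i _
    rcases val01 (w i) with h' | h'
    · rw [h', pow_zero]
    · have := h i
      rw [h'] at this ⊢
      rcases val01 (u i) with h'' | h'' <;> rw [h''] at this ⊢
      · omega
      · simp
  · push_neg at h
    obtain ⟨i, hi⟩ := h
    apply Finset.prod_eq_zero (Finset.mem_univ i)
    rcases val01 (w i) with h' | h' <;> rcases val01 (u i) with h'' | h'' <;>
      rw [h', h''] at hi ⊢ <;> simp at hi ⊢

private lemma uniq (k : ℕ) (ν : (Fin k → ZMod 2) → ℤ)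
    (h : ∀ v, ∑ u, ν u * mono k u v = 0) : ∀ u, ν u = 0 := by
  suffices key : ∀ n u, (∑ i, (u i).val) = n → ν u = 0 by
    intro u; exact key _ u rfl
  intro n
  induction n using Nat.strong_induction_on with
  | _ n ih =>
    intro u hu
    have h0 := h u
    have h1 : ∑ w : Fin k → ZMod 2, ν w * mono k w u
        = ∑ w ∈ univ.filter (fun w => ∀ i, (w i).val ≤ (u i).val), ν w := by
      rw [Finset.sum_filter]
      apply Finset.sum_congr rfl
      intro w _
      rw [mono_eval]
      split_ifs <;> ring
    rw [h1] at h0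
    have hmem : u ∈ univ.filter (fun w => ∀ i, (w i).val ≤ (u i).val) := by
      simp
    rw [← Finset.add_sum_erase _ _ hmem] at h0
    have hz : ∑ w ∈ (univ.filter (fun w => ∀ i, (w i).val ≤ (u i).val)).erase u, ν w = 0 := by
      apply Finset.sum_eq_zero
      intro w hw
      simp only [Finset.mem_erase, Finset.mem_filter] at hw
      obtain ⟨hne, _, hle⟩ := hw
      have hlt : ∑ i, (w i).val < n := by
        rw [← hu]
        apply Finset.sum_lt_sum (fun i _ => hle i)
        obtain ⟨i, hi⟩ := Function.ne_iff.mp hne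
        exact ⟨i, Finset.mem_univ i,
          lt_of_le_of_ne (hle i) (fun hh => hi (zmod2_val_injective hh))⟩
      exact ih (∑ i, (w i).val) hlt w rfl
    rw [hz, add_zero] at h0
    exact h0

/-- If the ANF of a Boolean function `f` in `k` variables has `r ≤ 2^k` nonzero
coefficients, then the NNF of `f` has at most `min (2^k) (2^r - 1)` nonzero
coefficients. -/
theorem nnf_support_bound (k : ℕ) (f : (Fin k → ZMod 2) → ZMod 2)
    (b : (Fin k → ZMod 2) → ZMod 2) (lam : (Fin k → ZMod 2) → ℤ) (r : ℕ)
    (hANF : ∀ v : Fin k → ZMod 2,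
      f v = ∑ u : Fin k → ZMod 2, b u * ∏ i, (v i) ^ (u i).val)
    (hr : (univ.filter fun u => b u ≠ 0).card = r)
    (hrle : r ≤ 2 ^ k)
    (hNNF : ∀ v : Fin k → ZMod 2,
      ((f v).val : ℤ) = ∑ u : Fin k → ZMod 2, lam u * ∏ i, ((v i).val : ℤ) ^ (u i).val) :
    (univ.filter fun u => lam u ≠ 0).card ≤ min (2 ^ k) (2 ^ r - 1) := by
  classical
  set T : Finset (Fin k → ZMod 2) := univ.filter (fun u => b u ≠ 0) with hT
  set P : Finset (Finset (Fin k → ZMod 2)) := T.powerset.filter (·.Nonempty) with hP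
  set μ : (Fin k → ZMod 2) → ℤ :=
    fun w => ∑ S ∈ P.filter (fun S => jn k S = w), (-2 : ℤ) ^ (S.card - 1) with hμ
  -- f v as sum over T
  have hfT : ∀ v, f v = ∑ u ∈ T, ∏ i, (v i) ^ (u i).val := by
    intro v
    rw [hANF v, ← Finset.sum_filter_add_sum_filter_not univ (fun u => b u ≠ 0)]
    have h1 : ∑ u ∈ univ.filter (fun u => ¬ b u ≠ 0), b u * ∏ i, (v i) ^ (u i).val = 0 := by
      apply Finset.sum_eq_zero
      intro u hu
      simp only [Finset.mem_filter, not_not] at hu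
      rw [hu.2, zero_mul]
    rw [h1, add_zero]
    apply Finset.sum_congr rfl
    intro u hu
    simp only [hT, Finset.mem_filter] at hu
    have hb1 : b u = 1 := by
      have h2 := hu.2; revert h2; generalize b u = x; revert x; decide
    rw [hb1, one_mul]
  -- value of monomial
  have hval : ∀ (v u : Fin k → ZMod 2),
      (((∏ i, (v i) ^ (u i).val).val : ℕ) : ℤ) = mono k u v := by
    intro v u
    unfold mono
    induction (univ : Finset (Fin k)) using Finset.induction with
    | empty => simpa using zmod2_val_one
    | insert _ _ hni ihp =>
      rw [Finset.prod_insert hni, Finset.prod_insert hni, zmod2_val_mul, ihp, zmod2_val_pow]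
  -- NNF of f via μ
  have hfμ : ∀ v, ((f v).val : ℤ) = ∑ w, μ w * mono k w v := by
    intro v
    rw [hfT v, parity_sum]
    have step1 : ∑ S ∈ T.powerset.filter (·.Nonempty),
          (-2 : ℤ) ^ (S.card - 1) * ∏ u ∈ S, (((∏ i, (v i) ^ (u i).val).val : ℕ) : ℤ)
        = ∑ S ∈ P, (-2 : ℤ) ^ (S.card - 1) * mono k (jn k S) v := by
      apply Finset.sum_congr rfl
      intro S _
      congr 1
      rw [← prod_mono]
      apply Finset.prod_congr rfl
      intro u _
      exact hval v u
    rw [step1]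
    rw [← Finset.sum_fiberwise P (jn k) (fun S => (-2 : ℤ) ^ (S.card - 1) * mono k (jn k S) v)]
    apply Finset.sum_congr rfl
    intro w _
    simp only [hμ]
    rw [Finset.sum_mul]
    apply Finset.sum_congr rfl
    intro S hS
    simp only [Finset.mem_filter] at hS
    rw [hS.2]
  -- lam = μ
  have hlm : ∀ u, lam u = μ u := by
    have h0 : ∀ v, ∑ u, (lam u - μ u) * mono k u v = 0 := by
      intro v
      have h1 : ∑ u, lam u * mono k u v = ((f v).val : ℤ) := (hNNF v).symm
      have h2 : ∑ u, μ u * mono k u v = ((f v).val : ℤ) := (hfμ v).symm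
      simp only [sub_mul, Finset.sum_sub_distrib, h1, h2, sub_self]
    intro u
    have := uniq k (fun u => lam u - μ u) h0 u
    omega
  -- support inclusion
  have hsub : univ.filter (fun u => lam u ≠ 0) ⊆ P.image (jn k) := by
    intro w hw
    simp only [Finset.mem_filter, Finset.mem_univ, true_and] at hw
    rw [hlm w] at hw
    have hw' : ∑ S ∈ P.filter (fun S => jn k S = w), (-2 : ℤ) ^ (S.card - 1) ≠ 0 := hw
    have hnon : (P.filter (fun S => jn k S = w)).Nonempty := by
      by_contra hc
      rw [Finset.not_nonempty_iff_eq_empty] at hc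
      rw [hc, Finset.sum_empty] at hw'
      exact hw' rfl
    obtain ⟨S, hS⟩ := hnon
    simp only [Finset.mem_filter] at hS
    exact Finset.mem_image.mpr ⟨S, hS.1, hS.2⟩
  have hcard1 : (univ.filter fun u => lam u ≠ 0).card ≤ 2 ^ r - 1 := by
    calc (univ.filter fun u => lam u ≠ 0).card ≤ (P.image (jn k)).card :=
          Finset.card_le_card hsub
      _ ≤ P.card := Finset.card_image_le
      _ = 2 ^ r - 1 := by
          have hPe : P = T.powerset.erase ∅ := by
            ext S
            simp [hP, Finset.nonempty_iff_ne_empty, and_comm]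
          rw [hPe, Finset.card_erase_of_mem (Finset.empty_mem_powerset T),
            Finset.card_powerset, hr]
  have hcard2 : (univ.filter fun u => lam u ≠ 0).card ≤ 2 ^ k := by
    calc (univ.filter fun u => lam u ≠ 0).card ≤ (univ : Finset (Fin k → ZMod 2)).card :=
          Finset.card_filter_le _ _
      _ = 2 ^ k := by simp [Finset.card_univ]
  exact le_min hcard2 hcard1
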